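/- ∫₀¹ ∫₀¹ g(s,t)² / (m(s)·m(t)) ds dt = π²/3 − 3, which is the constant D_wls appearing in the limit covariance kernel for the heteroscedasticity-weighted least squares version of the test. -/

import Mathlib

/-- `m(s) = s(1-s)`. -/
noncomputable def m (s : ℝ) : ℝ := s * (1 - s)

/-- `g(s,t) = min(s,t)·(1 - max(s,t))`. -/
noncomputable def g (s t : ℝ) : ℝ := min s t * (1 - max s t)

open MeasureTheory Real Set intervalIntegral Filter Topology



lemma integrable_pow_neg_log (n : ℕ) :
    IntervalIntegrable (fun x : ℝ => x ^ (n+1) * (-Real.log x)) volume 0 1 := by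
  rw [intervalIntegrable_iff_integrableOn_Ioc_of_le zero_le_one]
  apply Integrable.mono' (integrable_const (1:ℝ))
  · exact (((continuous_pow (n+1)).measurable).mul Real.measurable_log.neg).aestronglyMeasurable
  · refine (ae_restrict_iff' measurableSet_Ioc).2 (ae_of_all _ fun x hx => ?_)
    have hx0 := hx.1
    have hx1 := hx.2
    rw [Real.norm_eq_abs, abs_mul, abs_neg]
    calc |x ^ (n+1)| * |Real.log x| ≤ x * |Real.log x| := by
          apply mul_le_mul_of_nonneg_right _ (abs_nonneg _)
          rw [abs_of_nonneg (pow_nonneg hx0.le _), pow_succ]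
          calc x ^ n * x ≤ 1 * x := by
                apply mul_le_mul_of_nonneg_right (pow_le_one₀ hx0.le hx1) hx0.le
            _ = x := one_mul x
      _ = |Real.log x * x| := by rw [abs_mul, abs_of_nonneg hx0.le, mul_comm]
      _ ≤ 1 := (Real.abs_log_mul_self_lt x hx0 hx1).le

lemma integral_pow_neg_log (n : ℕ) :
    ∫ x in Set.Ioo (0:ℝ) 1, x ^ (n+1) * (-Real.log x) = 1 / ((n:ℝ)+2)^2 := by
  have hd : (0:ℝ) < (n:ℝ) + 2 := by positivity
  set c : ℝ := 1 / ((n:ℝ)+2)^2 with hc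
  set G : ℝ → ℝ := fun x => x ^ (n+2) * (c - Real.log x / ((n:ℝ)+2)) with hG
  rw [← MeasureTheory.integral_Ioc_eq_integral_Ioo,
      ← intervalIntegral.integral_of_le zero_le_one]
  have key : ∫ x in (0:ℝ)..1, x ^ (n+1) * (-Real.log x) = c - 0 := by
    apply intervalIntegral.integral_eq_sub_of_hasDerivAt_of_tendsto zero_lt_one
      (f := G) _ (integrable_pow_neg_log n) _ _
    · intro x hx
      have hx0 : x ≠ 0 := hx.1.ne'
      have h1 : HasDerivAt (fun y : ℝ => c - Real.log y / ((n:ℝ)+2))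
          (-(x⁻¹ / ((n:ℝ)+2))) x :=
        HasDerivAt.const_sub _ ((Real.hasDerivAt_log hx0).div_const _)
      have h2 := (hasDerivAt_pow (n+2) x).mul h1
      have hne : ((n:ℝ)+2) ≠ 0 := hd.ne'
      have hxx : x * x⁻¹ = 1 := mul_inv_cancel₀ hx0
      convert h2 using 1
      · rfl
      · rfl
      have h5 : ((n:ℕ)+2-1) = n+1 := rfl
      rw [h5, hc]
      push_cast
      rw [pow_succ x (n+1)]
      have expand : ((n:ℝ) + 2) * x ^ (n + 1) * (1 / ((n:ℝ) + 2) ^ 2 - Real.log x / ((n:ℝ) + 2)) +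
          x ^ (n + 1) * x * -(x⁻¹ / ((n:ℝ) + 2)) =
          x ^ (n+1) * (((n:ℝ)+2) / ((n:ℝ)+2)^2) - x^(n+1) * Real.log x * (((n:ℝ)+2)/((n:ℝ)+2))
          - x^(n+1) * (x * x⁻¹) / ((n:ℝ)+2) := by ring
      rw [expand, hxx, div_self hne, sq]
      rw [mul_div_assoc, div_mul_eq_div_div, div_self hne]
      ring
    · have hl : Tendsto (fun x : ℝ => Real.log x * x ^ ((n:ℝ)+2)) (𝓝[>] 0) (𝓝 0) :=
        tendsto_log_mul_rpow_nhdsGT_zero hd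
      have hp : Tendsto (fun x : ℝ => x ^ (n+2) * c) (𝓝[>] 0) (𝓝 0) := by
        have : Tendsto (fun x : ℝ => x ^ (n+2) * c) (𝓝 0) (𝓝 (0 ^ (n+2) * c)) :=
          ((continuous_pow (n+2)).mul continuous_const).tendsto 0
        simpa using this.mono_left nhdsWithin_le_nhds
      have hl2 : Tendsto (fun x : ℝ => Real.log x * x ^ (n+2) / ((n:ℝ)+2)) (𝓝[>] 0) (𝓝 0) := by
        have h' := hl.div_const ((n:ℝ)+2)
        rw [zero_div] at h'
        apply h'.congr'
        filter_upwards [self_mem_nhdsWithin] with x (hx : 0 < x)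
        rw [← Real.rpow_natCast x (n+2)]
        push_cast
        ring
      have hfin := hp.sub hl2
      rw [sub_zero] at hfin
      exact hfin.congr (fun x => by rw [hG]; ring)
    · have : ContinuousAt G 1 := by
        apply ContinuousAt.mul (continuous_pow _).continuousAt
        exact (continuousAt_const.sub ((Real.continuousAt_log one_ne_zero).div_const _))
      have h : Tendsto G (𝓝[<] 1) (𝓝 (G 1)) :=
        (this.continuousWithinAt (s := Set.Iio 1)).tendsto
      simpa [hG, Real.log_one] using h
  rw [key, sub_zero]



lemma integrableOn_pow_neg_log (n : ℕ) :
    IntegrableOn (fun x : ℝ => x ^ (n+1) * (-Real.log x)) (Set.Ioo 0 1) := by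
  have := (integrable_pow_neg_log n)
  rw [intervalIntegrable_iff_integrableOn_Ioc_of_le zero_le_one] at this
  exact this.mono_set Ioo_subset_Ioc_self

lemma hasSum_inv_add_two_sq :
    HasSum (fun n : ℕ => 1 / ((n:ℝ)+2)^2) (π^2/6 - 1) := by
  have h := hasSum_zeta_two
  rw [← (hasSum_nat_add_iff' 2)] at h
  convert h using 2 with n
  · rfl
  · push_cast; ring_nf
  · simp [Finset.sum_range_succ]

lemma integral_B : ∫ s in Set.Ioo (0:ℝ) 1, s * (-Real.log s) / (1 - s) = π^2/6 - 1 := by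
  have hsummable : Summable (fun n : ℕ => ∫ x in Set.Ioo (0:ℝ) 1,
      ‖x ^ (n+1) * (-Real.log x)‖) := by
    have : ∀ n : ℕ, (∫ x in Set.Ioo (0:ℝ) 1, ‖x ^ (n+1) * (-Real.log x)‖)
        = 1 / ((n:ℝ)+2)^2 := by
      intro n
      rw [← integral_pow_neg_log n]
      apply setIntegral_congr_fun measurableSet_Ioo
      intro x hx
      simp only
      rw [Real.norm_eq_abs, abs_of_nonneg]
      exact mul_nonneg (pow_nonneg hx.1.le _)
        (neg_nonneg.2 (Real.log_nonpos hx.1.le hx.2.le))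
    rw [funext this]
    exact hasSum_inv_add_two_sq.summable
  have hs := hasSum_integral_of_summable_integral_norm
      (μ := volume.restrict (Set.Ioo (0:ℝ) 1))
      (F := fun (n : ℕ) (x : ℝ) => x ^ (n+1) * (-Real.log x))
      (fun n => integrableOn_pow_neg_log n) hsummable
  have heq : ∀ x ∈ Set.Ioo (0:ℝ) 1,
      (∑' n : ℕ, x ^ (n+1) * (-Real.log x)) = x * (-Real.log x) / (1 - x) := by
    intro x hx
    rw [tsum_mul_right]
    have hg : (∑' n : ℕ, x ^ (n+1)) = x / (1-x) := by
      have : (∑' n : ℕ, x ^ (n+1)) = ∑' n : ℕ, x * x ^ n := by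
        congr 1; funext n; rw [pow_succ]; ring
      rw [this, tsum_mul_left, tsum_geometric_of_lt_one hx.1.le hx.2]
      rw [div_eq_mul_inv]
    rw [hg]
    ring
  have h2 : (∫ x in Set.Ioo (0:ℝ) 1, ∑' n : ℕ, x ^ (n+1) * (-Real.log x))
      = ∫ s in Set.Ioo (0:ℝ) 1, s * (-Real.log s) / (1 - s) :=
    setIntegral_congr_fun measurableSet_Ioo heq
  have h3 := hs.tsum_eq
  rw [h2] at h3
  rw [← h3]
  have h4 : ∀ n : ℕ, (∫ x in Set.Ioo (0:ℝ) 1, x ^ (n+1) * (-Real.log x))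
      = 1 / ((n:ℝ)+2)^2 := integral_pow_neg_log
  rw [tsum_congr h4]
  exact hasSum_inv_add_two_sq.tsum_eq




lemma inner_eq {s : ℝ} (hs : s ∈ Set.Ioo (0:ℝ) 1) :
    ∫ t in Set.Ioo (0:ℝ) 1, (g s t) ^ 2 / (m s * m t)
      = -1 + (1-s) * (-Real.log (1-s)) / s + s * (-Real.log s) / (1-s) := by
  obtain ⟨h0, h1⟩ := hs
  have h1s : (0:ℝ) < 1 - s := by linarith
  set F : ℝ → ℝ := fun t => (g s t) ^ 2 / (m s * m t) with hF
  set φ₁ : ℝ → ℝ := fun t => (1-s)/s * (-1 + (1-t)⁻¹) with hφ₁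
  set φ₂ : ℝ → ℝ := fun t => s/(1-s) * (-1 + t⁻¹) with hφ₂
  have e1 : Set.EqOn F φ₁ (Set.uIcc 0 s) := by
    intro t ht
    rw [Set.uIcc_of_le h0.le] at ht
    obtain ⟨ht0, hts⟩ := ht
    have ht1 : t < 1 := lt_of_le_of_lt hts h1
    have h1t : (0:ℝ) < 1 - t := by linarith
    rw [hF, hφ₁]
    simp only [g, m, min_eq_right hts, max_eq_left hts]
    rcases eq_or_lt_of_le ht0 with h | h
    · rw [← h]; simp
    · field_simp
      ring
  have e2 : Set.EqOn F φ₂ (Set.uIcc s 1) := by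
    intro t ht
    rw [Set.uIcc_of_le h1.le] at ht
    obtain ⟨hts, ht1⟩ := ht
    have ht0 : 0 < t := lt_of_lt_of_le h0 hts
    rw [hF, hφ₂]
    simp only [g, m, min_eq_left hts, max_eq_right hts]
    rcases eq_or_lt_of_le ht1 with h | h
    · rw [h]; simp
    · have h1t : (0:ℝ) < 1 - t := by linarith
      field_simp
      ring
  have c1 : ContinuousOn φ₁ (Set.uIcc 0 s) := by
    apply ContinuousOn.mul continuousOn_const
    apply ContinuousOn.add continuousOn_const
    apply ContinuousOn.inv₀ (by fun_prop)
    intro t ht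
    rw [Set.uIcc_of_le h0.le] at ht
    have : t < 1 := lt_of_le_of_lt ht.2 h1
    intro hc
    simp only [sub_eq_zero] at hc
    exact absurd hc.symm this.ne
  have c2 : ContinuousOn φ₂ (Set.uIcc s 1) := by
    apply ContinuousOn.mul continuousOn_const
    apply ContinuousOn.add continuousOn_const
    apply ContinuousOn.inv₀ (by fun_prop)
    intro t ht
    rw [Set.uIcc_of_le h1.le] at ht
    exact (lt_of_lt_of_le h0 ht.1).ne'
  have i1 : IntervalIntegrable φ₁ volume 0 s := c1.intervalIntegrable
  have i2 : IntervalIntegrable φ₂ volume s 1 := c2.intervalIntegrable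
  have iF1 : IntervalIntegrable F volume 0 s := by
    rw [intervalIntegrable_iff] at i1 ⊢
    apply i1.congr
    refine (ae_restrict_iff' measurableSet_uIoc).2 (ae_of_all _ fun t ht => ?_)
    exact (e1 (uIoc_subset_uIcc ht)).symm
  have iF2 : IntervalIntegrable F volume s 1 := by
    rw [intervalIntegrable_iff] at i2 ⊢
    apply i2.congr
    refine (ae_restrict_iff' measurableSet_uIoc).2 (ae_of_all _ fun t ht => ?_)
    exact (e2 (uIoc_subset_uIcc ht)).symm
  have split : ∫ t in Set.Ioo (0:ℝ) 1, F t
      = (∫ t in (0:ℝ)..s, F t) + ∫ t in s..(1:ℝ), F t := by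
    rw [intervalIntegral.integral_add_adjacent_intervals iF1 iF2,
        intervalIntegral.integral_of_le zero_le_one,
        MeasureTheory.integral_Ioc_eq_integral_Ioo]
  have int_inv1 : ∫ t in (0:ℝ)..s, (1-t)⁻¹ = -Real.log (1-s) := by
    have := intervalIntegral.integral_comp_sub_left (a := 0) (b := s)
      (fun u : ℝ => u⁻¹) 1
    rw [this, sub_zero, integral_inv_of_pos h1s one_pos, ← Real.log_inv]
    congr 1
    rw [one_div]
  have int_inv2 : ∫ t in s..(1:ℝ), t⁻¹ = -Real.log s := by
    rw [integral_inv_of_pos h0 one_pos, ← Real.log_inv, one_div]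
  have p1 : ∫ t in (0:ℝ)..s, F t = -(1-s) + (1-s) * (-Real.log (1-s)) / s := by
    rw [intervalIntegral.integral_congr e1, hφ₁]
    rw [intervalIntegral.integral_const_mul]
    rw [intervalIntegral.integral_add intervalIntegrable_const]
    · rw [intervalIntegral.integral_const, int_inv1]
      field_simp
      ring
    · apply ContinuousOn.intervalIntegrable
      apply ContinuousOn.inv₀ (by fun_prop)
      intro t ht
      rw [Set.uIcc_of_le h0.le] at ht
      have : t < 1 := lt_of_le_of_lt ht.2 h1
      intro hc
      simp only [sub_eq_zero] at hc
      exact absurd hc.symm this.ne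
  have p2 : ∫ t in s..(1:ℝ), F t = -s + s * (-Real.log s) / (1-s) := by
    rw [intervalIntegral.integral_congr e2, hφ₂]
    rw [intervalIntegral.integral_const_mul]
    rw [intervalIntegral.integral_add intervalIntegrable_const]
    · rw [intervalIntegral.integral_const, int_inv2]
      field_simp
      ring
    · apply ContinuousOn.intervalIntegrable
      apply ContinuousOn.inv₀ (by fun_prop)
      intro t ht
      rw [Set.uIcc_of_le h1.le] at ht
      exact (lt_of_lt_of_le h0 ht.1).ne'
  rw [split, p1, p2]
  ring




lemma B_bound {s : ℝ} (hs : s ∈ Set.Ioo (0:ℝ) 1) :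
    ‖s * (-Real.log s) / (1 - s)‖ ≤ 1 := by
  obtain ⟨h0, h1⟩ := hs
  have h1s : (0:ℝ) < 1 - s := by linarith
  have hlog : -Real.log s ≤ s⁻¹ - 1 := by
    have := Real.log_le_sub_one_of_pos (inv_pos.2 h0)
    rwa [Real.log_inv] at this
  have hnn : 0 ≤ s * (-Real.log s) / (1 - s) :=
    div_nonneg (mul_nonneg h0.le (neg_nonneg.2 (Real.log_nonpos h0.le h1.le))) h1s.le
  rw [Real.norm_eq_abs, abs_of_nonneg hnn]
  rw [div_le_one h1s]
  calc s * (-Real.log s) ≤ s * (s⁻¹ - 1) :=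
        mul_le_mul_of_nonneg_left hlog h0.le
    _ = 1 - s := by field_simp
lemma B_meas : Measurable (fun s : ℝ => s * (-Real.log s) / (1 - s)) :=
  (measurable_id.mul Real.measurable_log.neg).div (measurable_const.sub measurable_id)

lemma B_integrable : IntegrableOn (fun s : ℝ => s * (-Real.log s) / (1 - s))
    (Set.Ioo (0:ℝ) 1) := by
  apply Integrable.mono' (integrable_const (1:ℝ)) B_meas.aestronglyMeasurable
  exact (ae_restrict_iff' measurableSet_Ioo).2 (ae_of_all _ fun s hs => B_bound hs)

lemma A_eq_B : ∫ s in Set.Ioo (0:ℝ) 1, (1-s) * (-Real.log (1-s)) / s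
    = ∫ s in Set.Ioo (0:ℝ) 1, s * (-Real.log s) / (1 - s) := by
  rw [← MeasureTheory.integral_Ioc_eq_integral_Ioo,
      ← MeasureTheory.integral_Ioc_eq_integral_Ioo,
      ← intervalIntegral.integral_of_le zero_le_one,
      ← intervalIntegral.integral_of_le zero_le_one]
  have := intervalIntegral.integral_comp_sub_left (a := 0) (b := 1)
      (fun x : ℝ => x * (-Real.log x) / (1 - x)) 1
  rw [sub_zero, sub_self] at this
  rw [← this]
  congr 1
  funext s
  rw [sub_sub_cancel]

lemma A_integrable : IntegrableOn (fun s : ℝ => (1-s) * (-Real.log (1-s)) / s)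
    (Set.Ioo (0:ℝ) 1) := by
  apply Integrable.mono' (integrable_const (1:ℝ))
  · exact (((measurable_const.sub measurable_id).mul
      ((Real.measurable_log.comp (measurable_const.sub measurable_id)).neg)).div
      measurable_id).aestronglyMeasurable
  · refine (ae_restrict_iff' measurableSet_Ioo).2 (ae_of_all _ fun s hs => ?_)
    have : (1 - s) ∈ Set.Ioo (0:ℝ) 1 := ⟨by linarith [hs.2], by linarith [hs.1]⟩
    have hb := B_bound this
    rwa [sub_sub_cancel] at hb

/-- `∫₀¹∫₀¹ g(s,t)²/(m(s)m(t)) ds dt = π²/3 - 3` (integral over the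
open unit square). -/
theorem stmt5 :
    ∫ s in Set.Ioo (0 : ℝ) 1, ∫ t in Set.Ioo (0 : ℝ) 1,
        (g s t) ^ 2 / (m s * m t) = Real.pi ^ 2 / 3 - 3 := by
  rw [setIntegral_congr_fun measurableSet_Ioo (fun s hs => inner_eq hs)]
  have hconst : IntegrableOn (fun _ : ℝ => (-1:ℝ)) (Set.Ioo (0:ℝ) 1) :=
    integrableOn_const (by simp [Real.volume_Ioo])
  have hsum : IntegrableOn (fun x : ℝ => -1 + (1-x)*(-Real.log (1-x))/x)
      (Set.Ioo (0:ℝ) 1) := hconst.add A_integrable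
  rw [MeasureTheory.integral_add hsum B_integrable,
      MeasureTheory.integral_add hconst A_integrable]
  rw [A_eq_B, integral_B]
  simp [Real.volume_Ioo]
  ring
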